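/- Let k be a field, d ≥ 1, λ ∈ P(d) a partition, and M^λ' the permutation module k𝔖_d x_{λ'} and N^λ = k𝔖_d y_λ the signed permutation module. There is an algebra isomorphism from End_{k𝔖_d}(⊕_{ν∈Λ(n,d)} M^ν) to End_{k𝔖_d}(⊕_{ν∈Λ(n,d)} N^ν) sending each basis element ξ^g_{λ,μ} (g ∈ ^λD^μ_d) to the corresponding signed version η^g_{λ,μ} given by right multiplication with Y^g_{μ,λ} = ∑_{w∈𝔖_μ g 𝔖_λ ∩ ^μD} sgn(w) w. -/

import Mathlib

open Finset
open scoped Classical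

noncomputable section

/-- The partial sum `c 0 + ⋯ + c (s-1)` of a composition `c`. -/
def psum (c : ℕ → ℕ) (s : ℕ) : ℕ := ∑ r ∈ Finset.range s, c r

/-- `c` is a composition of `d` with (at most) `n` parts. -/
def IsComposition (n : ℕ) (c : ℕ → ℕ) (d : ℕ) : Prop :=
  (∀ s, n ≤ s → c s = 0) ∧ psum c n = d

/-- `c` is a partition of `d` with at most `n` parts. -/
def IsPartitionC (n : ℕ) (c : ℕ → ℕ) (d : ℕ) : Prop :=
  IsComposition n c d ∧ ∀ s t, s ≤ t → c t ≤ c s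

/-- The transposed partition: `(transp n c) i = #{s < n | c s > i}`. -/
def transp (n : ℕ) (c : ℕ → ℕ) : ℕ → ℕ := fun i =>
  ((Finset.range n).filter fun s => i < c s).card

/-- The dominance order: `Dominates c c'` means `c ⊴ c'`. -/
def Dominates (c c' : ℕ → ℕ) : Prop :=
  ∀ t, ∑ s ∈ Finset.range t, c s ≤ ∑ s ∈ Finset.range t, c' s

/-- The block index ("color") of the position `i` for the composition `c` with
`n` parts: position `i` lies in the `colorOf n c i`-th block. -/
def colorOf (n : ℕ) (c : ℕ → ℕ) (i : ℕ) : ℕ :=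
  ((Finset.range n).filter fun s => psum c (s + 1) ≤ i).card

/-- The Young (standard parabolic) subgroup `𝔖_c ≤ 𝔖_d` of the composition `c`:
the stabilizer of the block coloring. -/
def young (n : ℕ) (c : ℕ → ℕ) (d : ℕ) : Subgroup (Equiv.Perm (Fin d)) where
  carrier := {g | ∀ i : Fin d, colorOf n c (g i) = colorOf n c i}
  one_mem' := fun _ => rfl
  mul_mem' := by
    intro a b ha hb i
    simpa [Equiv.Perm.mul_apply] using (ha (b i)).trans (hb i)
  inv_mem' := by
    intro a ha i
    simpa using (ha (a⁻¹ i)).symm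

/-- The Coxeter length of a permutation (number of inversions). -/
def lenPerm (d : ℕ) (w : Equiv.Perm (Fin d)) : ℕ :=
  (Finset.univ.filter fun p : Fin d × Fin d => p.1 < p.2 ∧ w p.2 < w p.1).card

/-- `g` is the minimal-length representative of its double coset
`𝔖_{cl} g 𝔖_{cr}` (an element of `^{cl}𝒟^{cr}`). -/
def IsMinDC (d : ℕ) (nl : ℕ) (cl : ℕ → ℕ) (nr : ℕ) (cr : ℕ → ℕ)
    (g : Equiv.Perm (Fin d)) : Prop :=
  ∀ a ∈ young nl cl d, ∀ b ∈ young nr cr d, lenPerm d g ≤ lenPerm d (a * g * b)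

/-- `g` is the minimal-length representative of its coset `𝔖_c g`
(an element of `^{c}𝒟`). -/
def IsMinL (d : ℕ) (n : ℕ) (c : ℕ → ℕ) (g : Equiv.Perm (Fin d)) : Prop :=
  ∀ h ∈ young n c d, lenPerm d g ≤ lenPerm d (h * g)

/-- `x_c = ∑_{g ∈ 𝔖_c} g` in the group algebra `k𝔖_d`. -/
def xEl (k : Type) [CommRing k] (n : ℕ) (c : ℕ → ℕ) (d : ℕ) :
    MonoidAlgebra k (Equiv.Perm (Fin d)) :=
  ∑ g ∈ Finset.univ.filter fun g => g ∈ young n c d,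
    MonoidAlgebra.of k (Equiv.Perm (Fin d)) g

/-- `y_c = ∑_{g ∈ 𝔖_c} sgn(g) g` in the group algebra `k𝔖_d`. -/
def yEl (k : Type) [CommRing k] (n : ℕ) (c : ℕ → ℕ) (d : ℕ) :
    MonoidAlgebra k (Equiv.Perm (Fin d)) :=
  ∑ g ∈ Finset.univ.filter fun g => g ∈ young n c d,
    ((Equiv.Perm.sign g : ℤ) : k) • MonoidAlgebra.of k (Equiv.Perm (Fin d)) g

/-- `X^g_{μ,λ} = ∑_{w ∈ 𝔖_μ g 𝔖_λ ∩ ^μ𝒟} w`. -/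
def Xg (k : Type) [CommRing k] (d : ℕ) (nμ : ℕ) (cμ : ℕ → ℕ) (nl : ℕ) (cl : ℕ → ℕ)
    (g : Equiv.Perm (Fin d)) : MonoidAlgebra k (Equiv.Perm (Fin d)) :=
  ∑ w ∈ Finset.univ.filter fun w =>
      (∃ a ∈ young nμ cμ d, ∃ b ∈ young nl cl d, w = a * g * b) ∧ IsMinL d nμ cμ w,
    MonoidAlgebra.of k (Equiv.Perm (Fin d)) w

/-- `Y^g_{μ,λ} = ∑_{w ∈ 𝔖_μ g 𝔖_λ ∩ ^μ𝒟} sgn(w) w`. -/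
def Yg (k : Type) [CommRing k] (d : ℕ) (nμ : ℕ) (cμ : ℕ → ℕ) (nl : ℕ) (cl : ℕ → ℕ)
    (g : Equiv.Perm (Fin d)) : MonoidAlgebra k (Equiv.Perm (Fin d)) :=
  ∑ w ∈ Finset.univ.filter fun w =>
      (∃ a ∈ young nμ cμ d, ∃ b ∈ young nl cl d, w = a * g * b) ∧ IsMinL d nμ cμ w,
    ((Equiv.Perm.sign w : ℤ) : k) • MonoidAlgebra.of k (Equiv.Perm (Fin d)) w

/-- The permutation module `M^c = k𝔖_d · x_c` as a left ideal of `k𝔖_d`. -/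
def Mmod (k : Type) [CommRing k] (n : ℕ) (c : ℕ → ℕ) (d : ℕ) :
    Submodule (MonoidAlgebra k (Equiv.Perm (Fin d))) (MonoidAlgebra k (Equiv.Perm (Fin d))) :=
  Submodule.span (MonoidAlgebra k (Equiv.Perm (Fin d))) {xEl k n c d}

/-- The signed permutation module `N^c = k𝔖_d · y_c` as a left ideal of `k𝔖_d`. -/
def Nmod (k : Type) [CommRing k] (n : ℕ) (c : ℕ → ℕ) (d : ℕ) :
    Submodule (MonoidAlgebra k (Equiv.Perm (Fin d))) (MonoidAlgebra k (Equiv.Perm (Fin d))) :=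
  Submodule.span (MonoidAlgebra k (Equiv.Perm (Fin d))) {yEl k n c d}

instance (k : Type) [CommRing k] (d : ℕ)
    (p : Submodule (MonoidAlgebra k (Equiv.Perm (Fin d)))
      (MonoidAlgebra k (Equiv.Perm (Fin d)))) :
    SMulCommClass (MonoidAlgebra k (Equiv.Perm (Fin d))) k ↥p where
  smul_comm a c x := Subtype.ext <| by
    show a • (c • (x : MonoidAlgebra k (Equiv.Perm (Fin d)))) =
      c • (a • (x : MonoidAlgebra k (Equiv.Perm (Fin d))))
    exact (smul_comm c a ((x : MonoidAlgebra k (Equiv.Perm (Fin d))))).symm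

/-- The index set `Λ(n,d)` of compositions of `d` with at most `n` parts. -/
def CompT (n d : ℕ) : Type := {c : ℕ → ℕ // IsComposition n c d}

/-- The direct sum `⊕_{ν ∈ Λ(n,d)} M^ν` (realized as a product, the index set
being finite). -/
abbrev MMs (k : Type) [CommRing k] (n d : ℕ) : Type :=
  ∀ ν : CompT n d, ↥(Mmod k n ν.1 d)

/-- The direct sum `⊕_{ν ∈ Λ(n,d)} N^ν`. -/
abbrev NNs (k : Type) [CommRing k] (n d : ℕ) : Type :=
  ∀ ν : CompT n d, ↥(Nmod k n ν.1 d)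

/-- The endomorphism `ξ^g_{λ,μ}` of `⊕_ν M^ν`: zero on the summands `M^ρ`, `ρ ≠ μ`,
and mapping `M^μ` to `M^λ` by right multiplication with `X^g_{μ,λ}`. -/
def IsXi (k : Type) [CommRing k] (n d : ℕ) (lam mu : CompT n d) (g : Equiv.Perm (Fin d))
    (e : Module.End (MonoidAlgebra k (Equiv.Perm (Fin d))) (MMs k n d)) : Prop :=
  ∀ v : MMs k n d, ∀ ρ : CompT n d,
    (e v ρ : MonoidAlgebra k (Equiv.Perm (Fin d))) =
      if ρ = lam then
        (v mu : MonoidAlgebra k (Equiv.Perm (Fin d))) * Xg k d n mu.1 n lam.1 g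
      else 0

/-- The endomorphism `η^g_{λ,μ}` of `⊕_ν N^ν`: zero on the summands `N^ρ`, `ρ ≠ μ`,
and mapping `N^μ` to `N^λ` by right multiplication with `Y^g_{μ,λ}`. -/
def IsEta (k : Type) [CommRing k] (n d : ℕ) (lam mu : CompT n d) (g : Equiv.Perm (Fin d))
    (e : Module.End (MonoidAlgebra k (Equiv.Perm (Fin d))) (NNs k n d)) : Prop :=
  ∀ v : NNs k n d, ∀ ρ : CompT n d,
    (e v ρ : MonoidAlgebra k (Equiv.Perm (Fin d))) =
      if ρ = lam then
        (v mu : MonoidAlgebra k (Equiv.Perm (Fin d))) * Yg k d n mu.1 n lam.1 g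
      else 0


/-! ### Auxiliary construction: the sign-twist automorphism of the group algebra -/

namespace Stmt5Aux

variable (k : Type) [Field k] (d : ℕ)

abbrev G (d : ℕ) := Equiv.Perm (Fin d)
abbrev A (k : Type) [Field k] (d : ℕ) := MonoidAlgebra k (G d)

def sgnk (g : G d) : k := ((Equiv.Perm.sign g : ℤ) : k)

lemma sgnk_mul (g h : G d) : sgnk k d (g*h) = sgnk k d g * sgnk k d h := by
  simp [sgnk, ← Int.cast_mul, ← Units.val_mul]

lemma sgnk_sq (g : G d) : sgnk k d g * sgnk k d g = 1 := by
  rcases Int.units_eq_one_or (Equiv.Perm.sign g) with h | h <;> simp [sgnk, h]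

def uHom : G d →* A k d where
  toFun g := sgnk k d g • MonoidAlgebra.of k (G d) g
  map_one' := by simp [sgnk, MonoidAlgebra.one_def]
  map_mul' g h := by
    show sgnk k d (g*h) • _ = (sgnk k d g • _) * (sgnk k d h • _)
    rw [sgnk_mul, smul_mul_smul_comm, map_mul]

def sigma : A k d →ₐ[k] A k d := MonoidAlgebra.lift k (A k d) (G d) (uHom k d)

lemma sigma_of (g : G d) :
    sigma k d (MonoidAlgebra.of k (G d) g) = sgnk k d g • MonoidAlgebra.of k (G d) g := by
  rw [MonoidAlgebra.of_apply, sigma, MonoidAlgebra.lift_single, one_smul]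
  rfl

lemma sigma_sigma (x : A k d) : sigma k d (sigma k d x) = x := by
  have : (sigma k d).comp (sigma k d) = AlgHom.id k (A k d) := by
    apply MonoidAlgebra.algHom_ext
    intro g
    rw [AlgHom.comp_apply, AlgHom.id_apply]
    rw [← MonoidAlgebra.of_apply, sigma_of, map_smul, sigma_of, smul_smul, sgnk_sq, one_smul]
    exact Subsingleton.elim _ _
  exact DFunLike.congr_fun this x

variable (n : ℕ)

lemma sigma_x (c : ℕ → ℕ) : sigma k d (xEl k n c d) = yEl k n c d := by
  rw [xEl, yEl, map_sum]
  exact Finset.sum_congr rfl fun g _ => sigma_of k d g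

lemma sigma_y (c : ℕ → ℕ) : sigma k d (yEl k n c d) = xEl k n c d := by
  rw [← sigma_x k d n c, sigma_sigma]

lemma sigma_X (nμ : ℕ) (cμ : ℕ → ℕ) (nl : ℕ) (cl : ℕ → ℕ) (g : G d) :
    sigma k d (Xg k d nμ cμ nl cl g) = Yg k d nμ cμ nl cl g := by
  rw [Xg, Yg, map_sum]
  exact Finset.sum_congr rfl fun w _ => sigma_of k d w

lemma mem_N (c : ℕ → ℕ) {v : A k d} (h : v ∈ Mmod k n c d) :
    sigma k d v ∈ Nmod k n c d := by
  rw [Mmod, Submodule.mem_span_singleton] at h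
  rw [Nmod, Submodule.mem_span_singleton]
  obtain ⟨a, rfl⟩ := h
  exact ⟨sigma k d a, by rw [smul_eq_mul, smul_eq_mul, map_mul, sigma_x]⟩

lemma mem_M (c : ℕ → ℕ) {v : A k d} (h : v ∈ Nmod k n c d) :
    sigma k d v ∈ Mmod k n c d := by
  rw [Nmod, Submodule.mem_span_singleton] at h
  rw [Mmod, Submodule.mem_span_singleton]
  obtain ⟨a, rfl⟩ := h
  exact ⟨sigma k d a, by rw [smul_eq_mul, smul_eq_mul, map_mul, sigma_y]⟩

/-- The sign-twist map `⊕ M^ν → ⊕ N^ν`. -/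
def toN (v : MMs k n d) : NNs k n d :=
  fun ν => ⟨sigma k d (v ν), mem_N k d n ν.1 (v ν).2⟩

/-- The sign-twist map `⊕ N^ν → ⊕ M^ν`. -/
def toM (v : NNs k n d) : MMs k n d :=
  fun ν => ⟨sigma k d (v ν), mem_M k d n ν.1 (v ν).2⟩

lemma toM_toN (v : MMs k n d) : toM k d n (toN k d n v) = v := by
  funext ν; exact Subtype.ext (sigma_sigma k d _)

lemma toN_toM (v : NNs k n d) : toN k d n (toM k d n v) = v := by
  funext ν; exact Subtype.ext (sigma_sigma k d _)

lemma toN_add (v w : MMs k n d) : toN k d n (v + w) = toN k d n v + toN k d n w := by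
  funext ν; exact Subtype.ext (map_add _ _ _)

lemma toM_add (v w : NNs k n d) : toM k d n (v + w) = toM k d n v + toM k d n w := by
  funext ν; exact Subtype.ext (map_add _ _ _)

lemma toN_smul (a : A k d) (v : MMs k n d) :
    toN k d n (a • v) = sigma k d a • toN k d n v := by
  funext ν
  refine Subtype.ext ?_
  show sigma k d ((a • v ν : Mmod k n ν.1 d) : A k d) = sigma k d a • (sigma k d (v ν) : A k d)
  rw [Submodule.coe_smul, smul_eq_mul, smul_eq_mul, map_mul]

lemma toM_smul (a : A k d) (v : NNs k n d) :
    toM k d n (a • v) = sigma k d a • toM k d n v := by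
  funext ν
  refine Subtype.ext ?_
  show sigma k d ((a • v ν : Nmod k n ν.1 d) : A k d) = sigma k d a • (sigma k d (v ν) : A k d)
  rw [Submodule.coe_smul, smul_eq_mul, smul_eq_mul, map_mul]

lemma toN_ksmul (c : k) (v : MMs k n d) : toN k d n (c • v) = c • toN k d n v := by
  funext ν
  refine Subtype.ext ?_
  show sigma k d ((c • v ν : Mmod k n ν.1 d) : A k d) = c • (sigma k d (v ν) : A k d)
  rw [Submodule.coe_smul_of_tower, map_smul]

/-- Conjugation by the sign twist, on linear endomorphisms. -/
def conjL (e : Module.End (A k d) (MMs k n d)) : Module.End (A k d) (NNs k n d) where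
  toFun v := toN k d n (e (toM k d n v))
  map_add' v w := by
    show toN k d n (e (toM k d n (v + w))) = toN k d n (e (toM k d n v)) + toN k d n (e (toM k d n w))
    rw [toM_add, map_add, toN_add]
  map_smul' a v := by
    show toN k d n (e (toM k d n (a • v))) = a • toN k d n (e (toM k d n v))
    rw [toM_smul, map_smul, toN_smul, sigma_sigma]

/-- Conjugation by the sign twist, the other direction. -/
def conjR (f : Module.End (A k d) (NNs k n d)) : Module.End (A k d) (MMs k n d) where
  toFun v := toM k d n (f (toN k d n v))
  map_add' v w := by
    show toM k d n (f (toN k d n (v + w))) = toM k d n (f (toN k d n v)) + toM k d n (f (toN k d n w))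
    rw [toN_add, map_add, toM_add]
  map_smul' a v := by
    show toM k d n (f (toN k d n (a • v))) = a • toM k d n (f (toN k d n v))
    rw [toN_smul, map_smul, toM_smul, sigma_sigma]

/-- The algebra isomorphism of the two endomorphism algebras. -/
def Phi : Module.End (A k d) (MMs k n d) ≃+* Module.End (A k d) (NNs k n d) where
  toFun := conjL k d n
  invFun := conjR k d n
  left_inv e := by
    refine LinearMap.ext fun v => ?_
    show toM k d n (toN k d n (e (toM k d n (toN k d n v)))) = e v
    rw [toM_toN, toM_toN]
  right_inv f := by
    refine LinearMap.ext fun v => ?_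
    show toN k d n (toM k d n (f (toN k d n (toM k d n v)))) = f v
    rw [toN_toM, toN_toM]
  map_mul' e e' := by
    refine LinearMap.ext fun v => ?_
    show toN k d n (e (e' (toM k d n v))) = toN k d n (e (toM k d n (toN k d n (e' (toM k d n v)))))
    rw [toM_toN]
  map_add' e e' := by
    refine LinearMap.ext fun v => ?_
    show toN k d n ((e + e') (toM k d n v)) =
      toN k d n (e (toM k d n v)) + toN k d n (e' (toM k d n v))
    rw [LinearMap.add_apply, toN_add]

end Stmt5Aux

/-!
Statement 5: Over a field `k` there is an algebra isomorphism
`End_{k𝔖_d}(⊕_{ν∈Λ(n,d)} M^ν) → End_{k𝔖_d}(⊕_{ν∈Λ(n,d)} N^ν)` sending each basis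
element `ξ^g_{λ,μ}` (for `g ∈ ^λ𝒟^μ_d`) to the corresponding signed version
`η^g_{λ,μ}`.
-/

theorem stmt5 (k : Type) [Field k] (n d : ℕ) :
    ∃ φ : Module.End (MonoidAlgebra k (Equiv.Perm (Fin d))) (MMs k n d) ≃+*
        Module.End (MonoidAlgebra k (Equiv.Perm (Fin d))) (NNs k n d),
      -- `φ` is an isomorphism of `k`-algebras …
      (∀ (c : k) x, φ (c • x) = c • φ x) ∧
      -- … sending each `ξ^g_{λ,μ}` to `η^g_{λ,μ}`
      ∀ (lam mu : CompT n d) (g : Equiv.Perm (Fin d)),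
        IsMinDC d n lam.1 n mu.1 g →
        ∀ e f, IsXi k n d lam mu g e → IsEta k n d lam mu g f → φ e = f := by
  classical
  refine ⟨Stmt5Aux.Phi k d n, ?_, ?_⟩
  · intro c e
    refine LinearMap.ext fun v => ?_
    show Stmt5Aux.toN k d n ((c • e) (Stmt5Aux.toM k d n v)) =
      c • Stmt5Aux.toN k d n (e (Stmt5Aux.toM k d n v))
    rw [LinearMap.smul_apply, Stmt5Aux.toN_ksmul]
  · intro lam mu g _ e f he hf
    refine LinearMap.ext fun v => ?_
    funext ρ
    refine Subtype.ext ?_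
    show Stmt5Aux.sigma k d ((e (Stmt5Aux.toM k d n v) ρ : MonoidAlgebra k (Equiv.Perm (Fin d))))
      = ((f v ρ : MonoidAlgebra k (Equiv.Perm (Fin d))))
    rw [he (Stmt5Aux.toM k d n v) ρ, hf v ρ]
    by_cases h : ρ = lam
    · simp only [h, if_pos]
      show Stmt5Aux.sigma k d
        ((Stmt5Aux.sigma k d (v mu) : MonoidAlgebra k (Equiv.Perm (Fin d))) * Xg k d n mu.1 n lam.1 g) = _
      rw [map_mul, Stmt5Aux.sigma_sigma, Stmt5Aux.sigma_X]
    · simp only [h, if_neg, not_false_iff, map_zero]
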